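/- Let w ∈ ℝⁿ, assume the scenarios are indexed so that wᵀx₁ ≤ wᵀx₂ ≤ … ≤ wᵀx_S, let k be the largest integer in {0,…,S−1} with Σ_{j=1}^k p_j < α (the empty sum being 0), and set ε := α − Σ_{j=1}^k p_j. Then for every γ with 0 < γ < ε the following hold: (i) k is also the largest integer with Σ_{j=1}^k p_j < α − γ, and the corresponding boundary weight at level α − γ equals ε − γ; and (ii) (α/γ)·CVaR_{X,α}(w) − ((α−γ)/γ)·CVaR_{X,α−γ}(w) = wᵀx_{k+1}, i.e. this difference-of-concave combination of CVaRs equals the discrete Value-at-Risk of w at level α. -/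

import Mathlib

open scoped RealInnerProductSpace

/-- The discrete CVaR of portfolio `w` at level `β` for scenarios `x` with probabilities
`p`: `CVaR_{X,β}(w) = sup_{a ∈ ℝ} ( a + (1/β)·Σⱼ pⱼ·min(wᵀxⱼ − a, 0) )`. -/
noncomputable def discreteCVaR {n S : ℕ} (x : Fin S → EuclideanSpace ℝ (Fin n))
    (p : Fin S → ℝ) (β : ℝ) (w : EuclideanSpace ℝ (Fin n)) : ℝ :=
  sSup (Set.range fun a : ℝ => a + (1 / β) * ∑ j, p j * min (⟪w, x j⟫ - a) 0)

lemma cvar_val {n S : ℕ} (x : Fin S → EuclideanSpace ℝ (Fin n)) (p : Fin S → ℝ)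
    (hp : ∀ j, 0 < p j) (w : EuclideanSpace ℝ (Fin n))
    (hsorted : ∀ i j : Fin S, i ≤ j → ⟪w, x i⟫ ≤ ⟪w, x j⟫)
    (k : ℕ) (hk : k < S) (β : ℝ) (hβ0 : 0 < β)
    (hβ1 : ∑ j ∈ Finset.univ.filter (fun j : Fin S => (j : ℕ) < k), p j ≤ β)
    (hβ2 : β ≤ ∑ j ∈ Finset.univ.filter (fun j : Fin S => (j : ℕ) < k + 1), p j) :
    discreteCVaR x p β w =
      ⟪w, x ⟨k, hk⟩⟫ + (1 / β) * ∑ j, p j * min (⟪w, x j⟫ - ⟪w, x ⟨k, hk⟩⟫) 0 := by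
  classical
  set v := ⟪w, x ⟨k, hk⟩⟫ with hv
  have key : ∀ a : ℝ,
      a + (1 / β) * ∑ j, p j * min (⟪w, x j⟫ - a) 0 ≤
      v + (1 / β) * ∑ j, p j * min (⟪w, x j⟫ - v) 0 := by
    intro a
    have hmain : β * (a - v) ≤
        ∑ j, (p j * min (⟪w, x j⟫ - v) 0 - p j * min (⟪w, x j⟫ - a) 0) := by
      rcases le_total a v with hav | hav
      · calc β * (a - v)
            ≤ (∑ j ∈ Finset.univ.filter (fun j : Fin S => (j : ℕ) < k), p j) * (a - v) := by
              nlinarith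
          _ = ∑ j : Fin S, (if (j : ℕ) < k then p j * (a - v) else 0) := by
              rw [Finset.sum_mul, Finset.sum_filter]
          _ ≤ ∑ j, (p j * min (⟪w, x j⟫ - v) 0 - p j * min (⟪w, x j⟫ - a) 0) := by
              apply Finset.sum_le_sum
              intro j _
              split_ifs with hj
              · have hd : a - v ≤ min (⟪w, x j⟫ - v) 0 - min (⟪w, x j⟫ - a) 0 := by
                  simp only [min_def]; split_ifs <;> linarith
                nlinarith [mul_le_mul_of_nonneg_left hd (hp j).le]
              · have hvj : v ≤ ⟪w, x j⟫ :=
                  hsorted ⟨k, hk⟩ j (by simpa [Fin.le_def] using Nat.le_of_not_lt hj)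
                have hd : (0:ℝ) ≤ min (⟪w, x j⟫ - v) 0 - min (⟪w, x j⟫ - a) 0 := by
                  simp only [min_def]; split_ifs <;> linarith
                nlinarith [mul_le_mul_of_nonneg_left hd (hp j).le]
      · calc β * (a - v)
            ≤ (∑ j ∈ Finset.univ.filter (fun j : Fin S => (j : ℕ) < k + 1), p j) * (a - v) := by
              nlinarith
          _ = ∑ j : Fin S, (if (j : ℕ) < k + 1 then p j * (a - v) else 0) := by
              rw [Finset.sum_mul, Finset.sum_filter]
          _ ≤ ∑ j, (p j * min (⟪w, x j⟫ - v) 0 - p j * min (⟪w, x j⟫ - a) 0) := by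
              apply Finset.sum_le_sum
              intro j _
              split_ifs with hj
              · have hvj : ⟪w, x j⟫ ≤ v :=
                  hsorted j ⟨k, hk⟩ (by simpa [Fin.le_def] using Nat.lt_succ_iff.mp hj)
                have hd : a - v ≤ min (⟪w, x j⟫ - v) 0 - min (⟪w, x j⟫ - a) 0 := by
                  simp only [min_def]; split_ifs <;> linarith
                nlinarith [mul_le_mul_of_nonneg_left hd (hp j).le]
              · have hd : (0:ℝ) ≤ min (⟪w, x j⟫ - v) 0 - min (⟪w, x j⟫ - a) 0 := by
                  simp only [min_def]; split_ifs <;> linarith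
                nlinarith [mul_le_mul_of_nonneg_left hd (hp j).le]
    have hsplit : ∑ j, (p j * min (⟪w, x j⟫ - v) 0 - p j * min (⟪w, x j⟫ - a) 0)
        = (∑ j, p j * min (⟪w, x j⟫ - v) 0) - ∑ j, p j * min (⟪w, x j⟫ - a) 0 :=
      Finset.sum_sub_distrib _ _
    rw [hsplit] at hmain
    set Sv := ∑ j, p j * min (⟪w, x j⟫ - v) 0
    set Sa := ∑ j, p j * min (⟪w, x j⟫ - a) 0
    have h1 : a - v ≤ (Sv - Sa) / β := (le_div_iff₀ hβ0).mpr (by linarith)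
    have h2 : (Sv - Sa) / β = (1 / β) * Sv - (1 / β) * Sa := by ring
    linarith
  unfold discreteCVaR
  refine IsGreatest.csSup_eq ⟨⟨v, rfl⟩, ?_⟩
  rintro y ⟨a, rfl⟩
  exact key a

/-- With sorted scenarios, `k` the largest admissible index at level `α`,
`ε` the boundary weight and `0 < γ < ε`: (i) `k` is also the largest admissible index at
level `α − γ`, with boundary weight `ε − γ`; (ii) the DC combination
`(α/γ)·CVaR_{X,α}(w) − ((α−γ)/γ)·CVaR_{X,α−γ}(w)` equals `wᵀx_{k+1}`, the discrete VaR
(indexed by `k` in 0-based notation). -/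
theorem stmt_13 {n S : ℕ} (hS : 1 ≤ S)
    (x : Fin S → EuclideanSpace ℝ (Fin n)) (p : Fin S → ℝ)
    (hp : ∀ j, 0 < p j) (hps : ∑ j, p j = 1)
    (α : ℝ) (hα : α ∈ Set.Ioo (0 : ℝ) 1) (w : EuclideanSpace ℝ (Fin n))
    (hsorted : ∀ i j : Fin S, i ≤ j → ⟪w, x i⟫ ≤ ⟪w, x j⟫)
    (k : ℕ) (hk : k < S)
    (hklt : ∑ j ∈ Finset.univ.filter (fun j : Fin S => (j : ℕ) < k), p j < α)
    (hkmax : ∀ m : ℕ, m < S →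
      ∑ j ∈ Finset.univ.filter (fun j : Fin S => (j : ℕ) < m), p j < α → m ≤ k)
    (ε : ℝ) (hε : ε = α - ∑ j ∈ Finset.univ.filter (fun j : Fin S => (j : ℕ) < k), p j)
    (γ : ℝ) (hγ : 0 < γ) (hγε : γ < ε) :
    ((∑ j ∈ Finset.univ.filter (fun j : Fin S => (j : ℕ) < k), p j < α - γ) ∧
     (∀ m : ℕ, m < S →
       ∑ j ∈ Finset.univ.filter (fun j : Fin S => (j : ℕ) < m), p j < α - γ → m ≤ k) ∧
     (α - γ) - ∑ j ∈ Finset.univ.filter (fun j : Fin S => (j : ℕ) < k), p j = ε - γ) ∧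
    (α / γ) * discreteCVaR x p α w - ((α - γ) / γ) * discreteCVaR x p (α - γ) w =
      ⟪w, x ⟨k, hk⟩⟫ := by
  obtain ⟨hα0, hα1⟩ := hα
  set A := ∑ j ∈ Finset.univ.filter (fun j : Fin S => (j : ℕ) < k), p j with hA
  set B := ∑ j ∈ Finset.univ.filter (fun j : Fin S => (j : ℕ) < k + 1), p j with hB
  have hαB : α ≤ B := by
    by_contra h
    push_neg at h
    rcases lt_or_eq_of_le (Nat.succ_le_of_lt hk) with h1 | h1
    · exact absurd (hkmax (k + 1) h1 h) (by omega)
    · have : Finset.univ.filter (fun j : Fin S => (j : ℕ) < k + 1) = Finset.univ := by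
        ext j; simp [Finset.mem_filter]; omega
      rw [hB, this, hps] at h
      linarith
  have hAlt : A < α - γ := by rw [hε] at hγε; linarith
  have hcv1 : discreteCVaR x p α w =
      ⟪w, x ⟨k, hk⟩⟫ + (1 / α) * ∑ j, p j * min (⟪w, x j⟫ - ⟪w, x ⟨k, hk⟩⟫) 0 :=
    cvar_val x p hp w hsorted k hk α hα0 (le_of_lt hklt) hαB
  have hcv2 : discreteCVaR x p (α - γ) w =
      ⟪w, x ⟨k, hk⟩⟫ + (1 / (α - γ)) * ∑ j, p j * min (⟪w, x j⟫ - ⟪w, x ⟨k, hk⟩⟫) 0 := by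
    have hA0 : 0 ≤ A := Finset.sum_nonneg fun j _ => (hp j).le
    exact cvar_val x p hp w hsorted k hk (α - γ) (by linarith) hAlt.le (by linarith)
  refine ⟨⟨hAlt, fun m hm hsum => hkmax m hm (by linarith), by rw [hε]; ring⟩, ?_⟩
  rw [hcv1, hcv2]
  have hαγ : α - γ ≠ 0 := by
    have hA0 : 0 ≤ A := Finset.sum_nonneg fun j _ => (hp j).le
    have : 0 < α - γ := by rw [hε] at hγε; linarith
    linarith
  field_simp
  ring
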